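/- Let n ≥ 1, 0 ≤ q ≤ n, p = n − q, let I = diag(1,…,1,−1,…,−1) (p entries +1, q entries −1), and let Q = {(x', x_{n+1}) ∈ ℝⁿ × ℝ : x_{n+1} = x'ᵀ I x'}. An invertible linear map L of ℝ^{n+1} satisfies L(Q) = Q if and only if there exist A ∈ GL_n(ℝ) and λ ∈ ℝ, λ ≠ 0, with Aᵀ I A = λ I, such that L(x', x_{n+1}) = (A x', λ x_{n+1}) for all (x', x_{n+1}). -/

import Mathlib

open Matrix

/-- The diagonal matrix `diag(1,…,1,−1,…,−1)` with `p` entries `+1` followed by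
`n − p` entries `−1`. -/
def signMat' (n p : ℕ) : Matrix (Fin n) (Fin n) ℝ :=
  Matrix.diagonal fun i => if (i : ℕ) < p then 1 else -1

/-- The quadric `{(x', x_{n+1}) ∈ ℝⁿ × ℝ : x_{n+1} = x'ᵀ I x'}`. -/
def quadricGraph (n p : ℕ) : Set ((Fin n → ℝ) × ℝ) :=
  {w | w.2 = w.1 ⬝ᵥ (signMat' n p).mulVec w.1}

/-- Coefficients of a real polynomial of degree ≤ 4 with zero constant term
vanishing everywhere are zero. -/
lemma coeffs_zero (c1 c2 c3 c4 : ℝ)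
    (h : ∀ s : ℝ, c1 * s + c2 * s ^ 2 + c3 * s ^ 3 + c4 * s ^ 4 = 0) :
    c1 = 0 ∧ c2 = 0 ∧ c3 = 0 ∧ c4 = 0 := by
  have h1 := h 1
  have h2 := h (-1)
  have h3 := h 2
  have h4 := h (-2)
  norm_num at h1 h2 h3 h4
  exact ⟨by linarith, by linarith, by linarith, by linarith⟩

lemma signMat'_transpose (n p : ℕ) : (signMat' n p)ᵀ = signMat' n p :=
  Matrix.diagonal_transpose _

/-- Symmetry of the bilinear form. -/
lemma B_symm (n p : ℕ) (u v : Fin n → ℝ) :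
    u ⬝ᵥ (signMat' n p) *ᵥ v = v ⬝ᵥ (signMat' n p) *ᵥ u := by
  rw [dotProduct_mulVec, ← signMat'_transpose, vecMul_transpose, dotProduct_comm,
    signMat'_transpose]

/-- Change of variable in the quadratic form. -/
lemma conj_form (n p : ℕ) (A : Matrix (Fin n) (Fin n) ℝ) (x : Fin n → ℝ) :
    (A *ᵥ x) ⬝ᵥ (signMat' n p) *ᵥ (A *ᵥ x) = x ⬝ᵥ (Aᵀ * signMat' n p * A) *ᵥ x := by
  rw [← Matrix.mulVec_mulVec, ← Matrix.mulVec_mulVec, dotProduct_mulVec x,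
    vecMul_transpose]

lemma single_form (n p : ℕ) (i : Fin n) :
    Pi.single i (1 : ℝ) ⬝ᵥ (signMat' n p) *ᵥ Pi.single i (1 : ℝ)
      = if (i : ℕ) < p then 1 else -1 := by
  rw [signMat', Matrix.diagonal_mulVec_single, single_dotProduct, Pi.single_eq_same]
  ring

lemma single_form_ne (n p : ℕ) (i : Fin n) :
    Pi.single i (1 : ℝ) ⬝ᵥ (signMat' n p) *ᵥ Pi.single i (1 : ℝ) ≠ 0 := by
  rw [single_form]; split <;> norm_num

lemma signMat'_mulVec_eq_zero (n p : ℕ) (v : Fin n → ℝ)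
    (h : (signMat' n p) *ᵥ v = 0) : v = 0 := by
  funext i
  have hi := congrFun h i
  rw [signMat', Matrix.mulVec_diagonal] at hi
  simp only [Pi.zero_apply] at hi ⊢
  rcases mul_eq_zero.mp hi with h' | h'
  · exfalso; revert h'; split <;> norm_num
  · exact h'

/-- A symmetric matrix is determined by its quadratic form. -/
lemma quadform_ext {n : ℕ} (M N : Matrix (Fin n) (Fin n) ℝ) (hM : Mᵀ = M) (hN : Nᵀ = N)
    (h : ∀ x : Fin n → ℝ, x ⬝ᵥ M *ᵥ x = x ⬝ᵥ N *ᵥ x) : M = N := by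
  have key : ∀ (P : Matrix (Fin n) (Fin n) ℝ) (a b : Fin n),
      (Pi.single a (1:ℝ) + Pi.single b 1) ⬝ᵥ P *ᵥ (Pi.single a (1:ℝ) + Pi.single b 1)
        = P a a + P a b + P b a + P b b := by
    intro P a b
    simp [Matrix.mulVec_add, Matrix.mulVec_single, dotProduct_add, add_dotProduct,
      single_dotProduct]
    ring
  have single : ∀ (P : Matrix (Fin n) (Fin n) ℝ) (a : Fin n),
      Pi.single a (1:ℝ) ⬝ᵥ P *ᵥ Pi.single a (1:ℝ) = P a a := by
    intro P a
    simp [Matrix.mulVec_single, single_dotProduct]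
  ext i j
  have hij := h (Pi.single i 1 + Pi.single j 1)
  rw [key, key] at hij
  have hi := h (Pi.single i 1); rw [single, single] at hi
  have hj := h (Pi.single j 1); rw [single, single] at hj
  have hMs : M j i = M i j := by conv_lhs => rw [← hM, Matrix.transpose_apply]
  have hNs : N j i = N i j := by conv_lhs => rw [← hN, Matrix.transpose_apply]
  linarith

/-- The linear isotropy of the quadric: an invertible linear map `L` of `ℝ^{n+1}` preserves
the quadric iff `L(x', x_{n+1}) = (A x', λ x_{n+1})` with `A ∈ GL_n(ℝ)`, `λ ≠ 0` and
`Aᵀ I A = λ I`. -/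
theorem quadric_linear_isotropy (n q : ℕ) (hn : 1 ≤ n) (hq : q ≤ n) (p : ℕ)
    (hp : p = n - q) (L : ((Fin n → ℝ) × ℝ) ≃ₗ[ℝ] ((Fin n → ℝ) × ℝ)) :
    (⇑L '' quadricGraph n p = quadricGraph n p) ↔
      ∃ (A : Matrix (Fin n) (Fin n) ℝ) (lam : ℝ), IsUnit A ∧ lam ≠ 0 ∧
        Aᵀ * signMat' n p * A = lam • signMat' n p ∧
        ∀ w : (Fin n → ℝ) × ℝ, L w = (A.mulVec w.1, lam * w.2) := by
  set I := signMat' n p with hI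
  constructor
  · -- forward direction
    intro hQ
    set b : Fin n → ℝ := (L (0, 1)).1 with hb
    set lam : ℝ := (L (0, 1)).2 with hlamdef
    set Fl : (Fin n → ℝ) →ₗ[ℝ] (Fin n → ℝ) :=
      (LinearMap.fst ℝ (Fin n → ℝ) ℝ).comp (L.toLinearMap.comp (LinearMap.inl ℝ _ _)) with hFl
    set gl : (Fin n → ℝ) →ₗ[ℝ] ℝ :=
      (LinearMap.snd ℝ (Fin n → ℝ) ℝ).comp (L.toLinearMap.comp (LinearMap.inl ℝ _ _)) with hgl
    have hdecomp : ∀ (x : Fin n → ℝ) (t : ℝ),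
        L (x, t) = (Fl x + t • b, gl x + t * lam) := by
      intro x t
      have hxt : (x, t) = (x, (0:ℝ)) + t • ((0 : Fin n → ℝ), (1:ℝ)) := by
        simp [Prod.ext_iff]
      rw [hxt, map_add, _root_.map_smul]
      have h1 : L (x, (0:ℝ)) = (Fl x, gl x) := rfl
      rw [h1]
      simp [Prod.ext_iff, Prod.smul_def, smul_eq_mul, mul_comm]
      exact ⟨rfl, Or.inl rfl⟩
    have hmem' : ∀ y : Fin n → ℝ,
        gl y + (y ⬝ᵥ I *ᵥ y) * lam =
          (Fl y + (y ⬝ᵥ I *ᵥ y) • b) ⬝ᵥ I *ᵥ (Fl y + (y ⬝ᵥ I *ᵥ y) • b) := by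
      intro y
      have h1 : (y, y ⬝ᵥ I *ᵥ y) ∈ quadricGraph n p := rfl
      have h2 : L (y, y ⬝ᵥ I *ᵥ y) ∈ quadricGraph n p := by
        rw [← hQ]; exact Set.mem_image_of_mem _ h1
      have h3 : (L (y, y ⬝ᵥ I *ᵥ y)).2
          = (L (y, y ⬝ᵥ I *ᵥ y)).1 ⬝ᵥ I *ᵥ (L (y, y ⬝ᵥ I *ᵥ y)).1 := h2
      rw [hdecomp y (y ⬝ᵥ I *ᵥ y)] at h3
      exact h3
    -- main coefficient extraction
    have main : ∀ x : Fin n → ℝ,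
        gl x = 0 ∧ (Fl x ⬝ᵥ I *ᵥ Fl x) = lam * (x ⬝ᵥ I *ᵥ x) ∧
          (x ⬝ᵥ I *ᵥ x) * (Fl x ⬝ᵥ I *ᵥ b) = 0 ∧
          (x ⬝ᵥ I *ᵥ x) ^ 2 * (b ⬝ᵥ I *ᵥ b) = 0 := by
      intro x
      have h := coeffs_zero (gl x) ((x ⬝ᵥ I *ᵥ x) * lam - Fl x ⬝ᵥ I *ᵥ Fl x)
          (-(2 * (x ⬝ᵥ I *ᵥ x) * (Fl x ⬝ᵥ I *ᵥ b)))
          (-((x ⬝ᵥ I *ᵥ x) ^ 2 * (b ⬝ᵥ I *ᵥ b))) ?_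
      · refine ⟨h.1, by linarith [h.2.1], by linarith [h.2.2.1], by linarith [h.2.2.2]⟩
      intro s
      have hm := hmem' (s • x)
      have hqs : (s • x) ⬝ᵥ I *ᵥ (s • x) = s ^ 2 * (x ⬝ᵥ I *ᵥ x) := by
        rw [Matrix.mulVec_smul, smul_dotProduct, dotProduct_smul, smul_eq_mul, smul_eq_mul]
        ring
      rw [_root_.map_smul Fl, _root_.map_smul gl, hqs] at hm
      simp only [Matrix.mulVec_add, Matrix.mulVec_smul, dotProduct_add, add_dotProduct,
        dotProduct_smul, smul_dotProduct, smul_eq_mul] at hm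
      rw [B_symm n p b (Fl x), ← hI] at hm
      linear_combination hm
    have hglz : ∀ x, gl x = 0 := fun x => (main x).1
    -- the matrix A
    set A : Matrix (Fin n) (Fin n) ℝ :=
      Matrix.of (fun i j => Fl (Pi.single j 1) i) with hA
    have hsingle : ∀ j : Fin n,
        (fun k => if j = k then (1:ℝ) else 0) = Pi.single j 1 := by
      intro j; funext k; rw [Pi.single_apply]; simp [eq_comm]
    have hFA : ∀ x : Fin n → ℝ, A *ᵥ x = Fl x := by
      intro x
      funext i
      have hs := Fl.pi_apply_eq_sum_univ x
      simp only [hsingle] at hs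
      have : Fl x i = ∑ j, x j * Fl (Pi.single j 1) i := by
        rw [hs]; simp
      rw [this]
      simp only [Matrix.mulVec, dotProduct, hA, Matrix.of_apply]
      exact Finset.sum_congr rfl fun j _ => mul_comm _ _
    -- lam ≠ 0
    have hlam : lam ≠ 0 := by
      intro h0
      have hw := L.apply_symm_apply ((0 : Fin n → ℝ), (1:ℝ))
      set w := L.symm ((0 : Fin n → ℝ), 1) with hwdef
      have : L w = L (w.1, w.2) := rfl
      rw [this, hdecomp w.1 w.2] at hw
      have h2 := congrArg Prod.snd hw
      simp only [hglz, h0, mul_zero, add_zero] at h2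
      exact zero_ne_one h2
    -- A is a unit
    have hinj : Function.Injective A.mulVec := by
      have hker : ∀ v, A *ᵥ v = 0 → v = 0 := by
        intro v hv
        have h1 : L (v, 0) = 0 := by
          rw [hdecomp v 0]
          simp [hglz, hFA v ▸ hv]
        have h2 : ((v, (0:ℝ)) : (Fin n → ℝ) × ℝ) = 0 := by
          apply L.injective; rw [h1, map_zero]
        exact (Prod.ext_iff.mp h2).1
      intro v w hvw
      have : A *ᵥ (v - w) = 0 := by
        rw [Matrix.mulVec_sub, hvw, sub_self]
      have := hker _ this
      exact sub_eq_zero.mp this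
    have hAunit : IsUnit A := Matrix.mulVec_injective_iff_isUnit.mp hinj
    -- the matrix identity
    have hmat : Aᵀ * I * A = lam • I := by
      apply quadform_ext
      · rw [Matrix.transpose_mul, Matrix.transpose_mul, Matrix.transpose_transpose,
          hI, signMat'_transpose, Matrix.mul_assoc]
      · rw [Matrix.transpose_smul, hI, signMat'_transpose]
      · intro x
        rw [← conj_form, hFA]
        rw [show (lam • I) *ᵥ x = lam • (I *ᵥ x) from Matrix.smul_mulVec lam I x,
          dotProduct_smul, smul_eq_mul]
        exact (main x).2.1
    -- b = 0
    have hbz : b = 0 := by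
      have hz : Aᵀ *ᵥ (I *ᵥ b) = 0 := by
        funext i
        have h3 := (main (Pi.single i 1)).2.2.1
        have hne := single_form_ne n p i
        rw [← hI] at hne
        have h4 : Fl (Pi.single i 1) ⬝ᵥ I *ᵥ b = 0 := by
          rcases mul_eq_zero.mp h3 with h | h
          · exact absurd h hne
          · exact h
        have h5 : (Aᵀ *ᵥ (I *ᵥ b)) i = Fl (Pi.single i 1) ⬝ᵥ I *ᵥ b := by
          rw [← hFA, Matrix.mulVec_single]
          simp [Matrix.mulVec, dotProduct, Matrix.transpose_apply]
        rw [h5, h4]; rfl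
      have hIb : I *ᵥ b = 0 := by
        have hAt : Function.Injective Aᵀ.mulVec :=
          Matrix.mulVec_injective_iff_isUnit.mpr ((Matrix.isUnit_transpose A).mpr hAunit)
        apply hAt
        rw [hz, Matrix.mulVec_zero]
      exact signMat'_mulVec_eq_zero n p b hIb
    refine ⟨A, lam, hAunit, hlam, hmat, ?_⟩
    intro w
    have : L w = L (w.1, w.2) := rfl
    rw [this, hdecomp w.1 w.2]
    rw [hbz]
    simp [hglz, hFA, mul_comm]
  · -- backward direction
    rintro ⟨A, lam, hA, hlam, hmat, hL⟩
    have hmemiff : ∀ w : (Fin n → ℝ) × ℝ, L w ∈ quadricGraph n p ↔ w ∈ quadricGraph n p := by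
      intro w
      have h1 : L w ∈ quadricGraph n p ↔
          lam * w.2 = (A *ᵥ w.1) ⬝ᵥ I *ᵥ (A *ᵥ w.1) := by
        rw [quadricGraph, Set.mem_setOf_eq, hL w]
      rw [h1, conj_form n p A w.1, ← hI, hmat,
        show (lam • I) *ᵥ w.1 = lam • (I *ᵥ w.1) from Matrix.smul_mulVec lam I w.1,
        dotProduct_smul, smul_eq_mul]
      rw [quadricGraph, Set.mem_setOf_eq, ← hI]
      exact mul_right_inj' hlam
    ext y
    constructor
    · rintro ⟨w, hw, rfl⟩
      exact (hmemiff w).2 hw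
    · intro hy
      exact ⟨L.symm y, (hmemiff _).1 (by rw [L.apply_symm_apply]; exact hy),
        L.apply_symm_apply y⟩
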